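/- Let p > 0 and β ∈ ℝ. Let G : (0,∞) → ℝ be measurable with Laplace transform F(x) = ∫₀^∞ e^{−x t} G(t) dt converging absolutely for every x ≥ p, and assume the function (y,t) ↦ e^{−(y²+p) t} G(t) is integrable on (0,∞) × (0,∞). Then ∫₀^∞ t^{−1/2} e^{−p t − β²/(4t)} G(t) dt = (2/√π) ∫₀^∞ F(y² + p) cos(β y) dy. -/

import Mathlib

open MeasureTheory Set


lemma gauss_cos_full (t β : ℝ) (ht : 0 < t) :
    ∫ y : ℝ, Real.exp (-(t*y^2)) * Real.cos (β*y)
      = Real.sqrt (Real.pi/t) * Real.exp (-(β^2/(4*t))) := by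
  have hb : (-(t:ℂ)).re < 0 := by simpa using ht
  have h := integral_cexp_quadratic (b := -(t:ℂ)) hb (β * Complex.I) 0
  have hint : Integrable (fun x : ℝ => Complex.exp (-(t:ℂ) * x ^ 2 + (β*Complex.I) * x + 0)) :=
    integrable_cexp_quadratic' hb (β*Complex.I) 0
  have hre : ∀ x : ℝ, (Complex.exp (-(t:ℂ) * x ^ 2 + (β*Complex.I) * x + 0)).re
      = Real.exp (-(t*x^2)) * Real.cos (β*x) := by
    intro x
    have harg : (-(t:ℂ) * x ^ 2 + (β*Complex.I) * x + 0)
        = ((-(t*x^2) : ℝ) : ℂ) + ((β*x : ℝ):ℂ) * Complex.I := by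
      push_cast; ring
    rw [harg, Complex.exp_re]
    simp only [Complex.add_re, Complex.add_im, Complex.ofReal_re, Complex.ofReal_im,
      Complex.mul_re, Complex.mul_im, Complex.I_re, Complex.I_im, mul_zero, mul_one,
      zero_mul, sub_zero, zero_add, add_zero]
  have h1 : ∫ y : ℝ, Real.exp (-(t*y^2)) * Real.cos (β*y)
      = (∫ x : ℝ, Complex.exp (-(t:ℂ) * x ^ 2 + (β*Complex.I) * x + 0)).re := by
    have := integral_re (μ := volume) hint
    simp only [RCLike.re_to_complex] at this
    rw [← this]
    exact integral_congr_ae (Filter.Eventually.of_forall fun x => (hre x).symm)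
  rw [h1, h]
  have hquad : (0 - (β*Complex.I)^2 / (4 * (-(t:ℂ)))) = ((-(β^2/(4*t)) : ℝ) : ℂ) := by
    have : (β*Complex.I)^2 = -(β^2 : ℂ) := by
      rw [mul_pow, Complex.I_sq]; push_cast; ring
    rw [this]
    push_cast
    field_simp
    ring
  have hpow : ((Real.pi : ℂ) / -(-(t:ℂ))) ^ (1/2 : ℂ) = ((Real.sqrt (Real.pi/t) : ℝ) : ℂ) := by
    rw [neg_neg, Real.sqrt_eq_rpow, Complex.ofReal_cpow (by positivity)]
    push_cast
    ring_nf
  rw [hquad, hpow, ← Complex.ofReal_exp, ← Complex.ofReal_mul, Complex.ofReal_re]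

lemma gauss_cos_Ioi (t β : ℝ) (ht : 0 < t) :
    ∫ y in Ioi (0:ℝ), Real.exp (-(t*y^2)) * Real.cos (β*y)
      = Real.sqrt (Real.pi/t) / 2 * Real.exp (-(β^2/(4*t))) := by
  have h2 := integral_comp_abs (f := fun y => Real.exp (-(t*y^2)) * Real.cos (β*y))
  have heq : (fun x : ℝ => Real.exp (-(t*|x|^2)) * Real.cos (β*|x|))
      = fun x => Real.exp (-(t*x^2)) * Real.cos (β*x) := by
    funext x
    rw [_root_.sq_abs]
    rcases abs_choice x with h | h
    · rw [h]
    · rw [h, mul_neg, Real.cos_neg]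
  rw [heq] at h2
  rw [gauss_cos_full t β ht] at h2
  linarith

/-- If `F` is the Laplace transform of `G` (converging absolutely for all `x ≥ p`), `p > 0`, and
`(y,t) ↦ e^{−(y²+p)t} G(t)` is integrable on `(0,∞) × (0,∞)`, then
`∫₀^∞ t^{−1/2} e^{−p t − β²/(4t)} G(t) dt = (2/√π) ∫₀^∞ F(y²+p) cos(β y) dy`. -/
theorem integral_rpow_exp_laplace_cos (p β : ℝ) (hp : 0 < p) (G F : ℝ → ℝ)
    (hG : Measurable G)
    (hFconv : ∀ x, p ≤ x → IntegrableOn (fun t => Real.exp (-(x * t)) * G t) (Ioi 0))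
    (hF : ∀ x, p ≤ x → F x = ∫ t in Ioi (0:ℝ), Real.exp (-(x * t)) * G t)
    (hprod : Integrable
      (fun q : ℝ × ℝ => Real.exp (-((q.1 ^ 2 + p) * q.2)) * G q.2)
      ((volume.restrict (Ioi (0:ℝ))).prod (volume.restrict (Ioi (0:ℝ))))) :
    ∫ t in Ioi (0:ℝ), t ^ (-(1:ℝ)/2) * Real.exp (-(p * t) - β ^ 2 / (4 * t)) * G t
      = 2 / Real.sqrt Real.pi * ∫ y in Ioi (0:ℝ), F (y ^ 2 + p) * Real.cos (β * y) := by
  have hπ : (0:ℝ) < Real.pi := Real.pi_pos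
  -- the integrand after expanding F and pulling cos inside
  have hHmeas : Measurable (fun q : ℝ × ℝ =>
      Real.exp (-((q.1 ^ 2 + p) * q.2)) * G q.2 * Real.cos (β * q.1)) := by
    have h1 : Measurable (fun q : ℝ × ℝ => Real.exp (-((q.1 ^ 2 + p) * q.2))) :=
      (((measurable_fst.pow_const 2).add_const p).mul measurable_snd).neg.exp
    exact (h1.mul (hG.comp measurable_snd)).mul
      ((measurable_const.mul measurable_fst).cos)
  have hH : Integrable (fun q : ℝ × ℝ =>
      Real.exp (-((q.1 ^ 2 + p) * q.2)) * G q.2 * Real.cos (β * q.1))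
      ((volume.restrict (Ioi (0:ℝ))).prod (volume.restrict (Ioi (0:ℝ)))) := by
    refine hprod.mono hHmeas.aestronglyMeasurable ?_
    filter_upwards with q
    rw [norm_mul]
    calc ‖Real.exp (-((q.1 ^ 2 + p) * q.2)) * G q.2‖ * ‖Real.cos (β * q.1)‖
        ≤ ‖Real.exp (-((q.1 ^ 2 + p) * q.2)) * G q.2‖ * 1 := by
          apply mul_le_mul_of_nonneg_left _ (norm_nonneg _)
          simpa [Real.norm_eq_abs] using Real.abs_cos_le_one (β * q.1)
      _ = ‖Real.exp (-((q.1 ^ 2 + p) * q.2)) * G q.2‖ := mul_one _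
  have hrhs : ∫ y in Ioi (0:ℝ), F (y ^ 2 + p) * Real.cos (β * y)
      = ∫ y in Ioi (0:ℝ), ∫ t in Ioi (0:ℝ),
          Real.exp (-((y^2+p)*t)) * G t * Real.cos (β*y) := by
    refine setIntegral_congr_fun measurableSet_Ioi (fun y _ => ?_)
    rw [hF _ (le_add_of_nonneg_left (sq_nonneg y)), ← integral_mul_const]
  have hswap : (∫ y in Ioi (0:ℝ), ∫ t in Ioi (0:ℝ),
          Real.exp (-((y^2+p)*t)) * G t * Real.cos (β*y))
      = ∫ t in Ioi (0:ℝ), ∫ y in Ioi (0:ℝ),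
          Real.exp (-((y^2+p)*t)) * G t * Real.cos (β*y) :=
    integral_integral_swap hH
  have hinner : ∀ t ∈ Ioi (0:ℝ), (∫ y in Ioi (0:ℝ),
        Real.exp (-((y^2+p)*t)) * G t * Real.cos (β*y))
      = Real.sqrt Real.pi / 2
          * (t ^ (-(1:ℝ)/2) * Real.exp (-(p*t) - β^2/(4*t)) * G t) := by
    intro t ht
    rw [mem_Ioi] at ht
    have h1 : ∀ y : ℝ, Real.exp (-((y^2+p)*t)) * G t * Real.cos (β*y)
        = (Real.exp (-(t*y^2)) * Real.cos (β*y)) * (Real.exp (-(p*t)) * G t) := by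
      intro y
      rw [show -((y^2+p)*t) = -(t*y^2) + -(p*t) by ring, Real.exp_add]
      ring
    simp_rw [h1]
    rw [integral_mul_const, gauss_cos_Ioi t β ht]
    have hts : Real.sqrt t ≠ 0 := ne_of_gt (Real.sqrt_pos.mpr ht)
    have hrp : t ^ (-(1:ℝ)/2) = (Real.sqrt t)⁻¹ := by
      rw [show (-(1:ℝ)/2) = -(1/2) by ring, Real.rpow_neg ht.le, Real.sqrt_eq_rpow]
    rw [hrp, Real.sqrt_div hπ.le,
      show -(p*t) - β^2/(4*t) = -(β^2/(4*t)) + -(p*t) by ring, Real.exp_add]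
    field_simp
  rw [hrhs, hswap, setIntegral_congr_fun measurableSet_Ioi hinner, integral_const_mul]
  have hsπ : Real.sqrt Real.pi ≠ 0 := ne_of_gt (Real.sqrt_pos.mpr hπ)
  field_simp
  ring
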